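/- Let Λ = ℤ/ℓ^r ℤ and let Λ[[X,Y]] be the power series ring in two variables over Λ. Let J_k be the ideal generated by ((X+1)^{ℓ^k} - 1, (Y+1)^{ℓ^k} - 1) and let 𝔞 = (X,Y) be the augmentation ideal. Then J_{r+k-2} ⊆ 𝔞^k for all k ≥ 1. -/

import Mathlib

open MvPowerSeries

/-- In a commutative ring, if `a ^ 2 = 0` then `(1 + a) ^ n = 1 + n • a`. -/
lemma pow_one_add_of_sq_eq_zero {R : Type*} [CommRing R] (a : R) (h : a * a = 0) :
    ∀ n : ℕ, (1 + a) ^ n = 1 + (n : R) * a := by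
  intro n
  induction n with
  | zero => simp
  | succ n ih =>
    rw [pow_succ, ih]
    push_cast
    linear_combination (n : R) * h

/-- Strengthened binomial bound for ideals. -/
lemma sup_pow_le_pow_sup_pow' {R : Type*} [CommRing R] (I J : Ideal R) (n m : ℕ) :
    (I ⊔ J) ^ (n + m + 1) ≤ I ^ (n + 1) ⊔ J ^ (m + 1) := by
  rw [← Ideal.add_eq_sup, ← Ideal.add_eq_sup, add_pow, Ideal.sum_eq_sup]
  apply Finset.sup_le
  intro i hi
  by_cases hn : n + 1 ≤ i
  · exact Ideal.mul_le_left.trans (Ideal.mul_le_left.trans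
      ((Ideal.pow_le_pow_right hn).trans le_sup_left))
  · refine Ideal.mul_le_left.trans (Ideal.mul_le_right.trans
      ((Ideal.pow_le_pow_right ?_).trans le_sup_right))
    simp only [Finset.mem_range] at hi
    omega

/-- Key induction: if `a ∈ I` and `(n : R) ∈ I`, then `(1+a)^(n^m) - 1 ∈ I^(m+1)`. -/
lemma key_mem {R : Type*} [CommRing R] (I : Ideal R) (a : R) (ha : a ∈ I)
    (n : ℕ) (hn : (n : R) ∈ I) : ∀ m : ℕ, (1 + a) ^ n ^ m - 1 ∈ I ^ (m + 1) := by
  intro m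
  induction m with
  | zero => simpa using ha
  | succ m ih =>
    set u : R := (1 + a) ^ n ^ m - 1 with hu
    have h1 : (1 + a) ^ n ^ (m + 1) = (1 + u) ^ n := by
      rw [pow_succ, pow_mul, hu]; ring_nf
    have hI2 : I ^ (m + 1) * I ^ (m + 1) ≤ I ^ (m + 2) := by
      rw [← pow_add]
      exact Ideal.pow_le_pow_right (by omega)
    have h2 : u * u ∈ I ^ (m + 2) := hI2 (Ideal.mul_mem_mul ih ih)
    have h3 : (n : R) * u ∈ I ^ (m + 2) := by
      have : I * I ^ (m + 1) ≤ I ^ (m + 2) := by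
        rw [← pow_succ']
      exact this (Ideal.mul_mem_mul hn ih)
    rw [h1]
    -- work in the quotient
    rw [← Ideal.Quotient.eq_zero_iff_mem]
    have hq2 : (Ideal.Quotient.mk (I ^ (m + 2)) u) * (Ideal.Quotient.mk (I ^ (m + 2)) u) = 0 := by
      rw [← map_mul, Ideal.Quotient.eq_zero_iff_mem]; exact h2
    have := pow_one_add_of_sq_eq_zero (Ideal.Quotient.mk (I ^ (m + 2)) u) hq2 n
    have hq3 : ((n : R ⧸ I ^ (m + 2))) * (Ideal.Quotient.mk (I ^ (m + 2)) u) = 0 := by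
      rw [← map_natCast (Ideal.Quotient.mk (I ^ (m + 2))) n, ← map_mul,
        Ideal.Quotient.eq_zero_iff_mem]
      exact h3
    simp only [map_sub, map_pow, map_add, map_one]
    rw [this, hq3]
    ring

/-- Let `Λ = ℤ/ℓ^r ℤ` and `Λ[[X,Y]]` the power series ring in two
variables over `Λ`.  Let `J_k` be the ideal generated by
`((X+1)^{ℓ^k} - 1, (Y+1)^{ℓ^k} - 1)` and `𝔞 = (X,Y)` the augmentation ideal.
Then `J_{r+k-2} ⊆ 𝔞^k` for all `k ≥ 1`. -/
theorem stmt0 (ℓ r k : ℕ) (hℓ : ℓ.Prime) (hr : 1 ≤ r) (hk : 1 ≤ k) :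
    Ideal.span {((MvPowerSeries.X 0 + 1) ^ ℓ ^ (r + k - 2) - 1 :
        MvPowerSeries (Fin 2) (ZMod (ℓ ^ r))),
      (MvPowerSeries.X 1 + 1) ^ ℓ ^ (r + k - 2) - 1} ≤
    (Ideal.span {(MvPowerSeries.X 0 : MvPowerSeries (Fin 2) (ZMod (ℓ ^ r))),
      MvPowerSeries.X 1}) ^ k := by
  set R := MvPowerSeries (Fin 2) (ZMod (ℓ ^ r))
  have hNT : NeZero (ℓ ^ r) := ⟨pow_ne_zero _ hℓ.pos.ne'⟩
  set 𝔞 : Ideal R := Ideal.span {MvPowerSeries.X 0, MvPowerSeries.X 1}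
  -- main per-variable lemma
  have main : ∀ i : Fin 2, (MvPowerSeries.X i + 1 : R) ^ ℓ ^ (r + k - 2) - 1 ∈ 𝔞 ^ k := by
    intro i
    set I : Ideal R := Ideal.span {(ℓ : R)} ⊔ Ideal.span {(MvPowerSeries.X i : R)}
    have hXI : (MvPowerSeries.X i : R) ∈ I :=
      Ideal.mem_sup_right (Ideal.subset_span rfl)
    have hℓI : ((ℓ : ℕ) : R) ∈ I := Ideal.mem_sup_left (Ideal.subset_span rfl)
    have hkey := key_mem I (MvPowerSeries.X i) hXI ℓ hℓI (r + k - 2)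
    have hexp : r + k - 2 + 1 = (r - 1) + (k - 1) + 1 := by omega
    rw [hexp] at hkey
    have hsup := sup_pow_le_pow_sup_pow' (Ideal.span {(ℓ : R)})
      (Ideal.span {(MvPowerSeries.X i : R)}) (r - 1) (k - 1)
    have hmem := hsup hkey
    have hr1 : r - 1 + 1 = r := by omega
    have hk1 : k - 1 + 1 = k := by omega
    rw [hr1, hk1] at hmem
    -- the ℓ^r part is zero
    have hℓr : (Ideal.span {(ℓ : R)}) ^ r = ⊥ := by
      rw [Ideal.span_singleton_pow, Ideal.span_singleton_eq_bot]
      calc ((ℓ : R)) ^ r = ((ℓ ^ r : ℕ) : R) := by rw [Nat.cast_pow]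
        _ = (MvPowerSeries.C (σ := Fin 2) (R := ZMod (ℓ ^ r))) ((ℓ ^ r : ℕ) : ZMod (ℓ ^ r)) := by
            rw [map_natCast]
        _ = 0 := by rw [ZMod.natCast_self, map_zero]
    rw [hℓr, bot_sup_eq] at hmem
    have hXle : (Ideal.span {(MvPowerSeries.X i : R)}) ^ k ≤ 𝔞 ^ k := by
      apply Ideal.pow_right_mono
      apply Ideal.span_mono
      intro x hx
      rcases hx with rfl
      fin_cases i <;> simp [Set.mem_insert_iff]
    have := hXle hmem
    convert this using 2
    rw [add_comm]
  apply Ideal.span_le.2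
  intro x hx
  rcases hx with rfl | hx
  · exact main 0
  · rcases hx with rfl
    exact main 1
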